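/- Let m ≤ n and ψ an approximating function. If X is an m×n real matrix with entries in [-1/2,1/2] satisfying |qX|_∞ < ψ(|q|_∞) for infinitely many q ∈ ℤᵐ \ {0}, then every m×m minor of X formed by choosing m columns of X has determinant zero. -/

import Mathlib

open MeasureTheory Filter

noncomputable def qnorm {m : ℕ} (q : Fin m → ℤ) : ℝ := ‖(fun i => (q i : ℝ) : Fin m → ℝ)‖

def cube (m n : ℕ) : Set (Fin m → Fin n → ℝ) :=
  {X | ∀ i j, X i j ∈ Set.Icc (-(1/2) : ℝ) (1/2)}

def W0 (m n : ℕ) (ψ : ℝ → ℝ) : Set (Fin m → Fin n → ℝ) :=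
  {X | X ∈ cube m n ∧
    {q : Fin m → ℤ | q ≠ 0 ∧
      ‖(fun j => ∑ i, (q i : ℝ) * X i j : Fin n → ℝ)‖ < ψ (qnorm q)}.Infinite}

noncomputable def Hf {α : Type*} [EMetricSpace α] [MeasurableSpace α] [BorelSpace α]
    (f : ℝ → ℝ) : Measure α :=
  Measure.mkMetric (fun d => ENNReal.ofReal (f d.toReal))
theorem stmt7 (m n : ℕ) (hm : 1 ≤ m) (hmn : m ≤ n) (ψ : ℝ → ℝ)
    (hψ : AntitoneOn ψ (Set.Ioi 0)) (hψpos : ∀ r > 0, 0 < ψ r)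
    (hψ0 : Tendsto ψ atTop (nhds 0))
    (X : Fin m → Fin n → ℝ) (hX : X ∈ W0 m n ψ) :
    ∀ c : Fin m → Fin n, Function.Injective c →
      Matrix.det (Matrix.of fun i j => X i (c j)) = 0 := by
  intro c hc
  by_contra hdet
  obtain ⟨hcube, hinf⟩ := hX
  set M : Matrix (Fin m) (Fin m) ℝ := Matrix.of (fun i j => X i (c j)) with hMdef
  have hunit : IsUnit M.det := isUnit_iff_ne_zero.mpr hdet
  set A : Matrix (Fin m) (Fin m) ℝ := M⁻¹ with hAdef
  set C : ℝ := (∑ j, ∑ i, |A j i|) + 1 with hCdef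
  have hCpos : 0 < C := by
    have : (0:ℝ) ≤ ∑ j, ∑ i, |A j i| :=
      Finset.sum_nonneg fun j _ => Finset.sum_nonneg fun i _ => abs_nonneg _
    linarith
  have hev : ∀ᶠ r in atTop, ψ r < 1 / C :=
    hψ0.eventually_lt_const (by positivity)
  obtain ⟨R, hR⟩ := eventually_atTop.mp hev
  -- find q in the infinite set with qnorm q ≥ R
  have hfin : {q : Fin m → ℤ | qnorm q < R}.Finite := by
    apply Set.Finite.subset (Set.Finite.pi (fun i : Fin m => Set.finite_Icc (-⌈R⌉) ⌈R⌉))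
    intro q hq
    intro i _
    have h1 : |(q i : ℝ)| ≤ qnorm q := by
      have := norm_le_pi_norm (fun i => (q i : ℝ) : Fin m → ℝ) i
      simpa [qnorm, Real.norm_eq_abs] using this
    have h2 : (|q i| : ℝ) ≤ ⌈R⌉ := by
      push_cast
      calc |(q i : ℝ)| ≤ qnorm q := h1
        _ ≤ R := le_of_lt hq
        _ ≤ ⌈R⌉ := Int.le_ceil R
    have h3 : |q i| ≤ ⌈R⌉ := by exact_mod_cast h2
    exact Set.mem_Icc.mpr (abs_le.mp h3)
  obtain ⟨q, hqmem, hqR⟩ : ∃ q, q ∈ {q : Fin m → ℤ | q ≠ 0 ∧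
      ‖(fun j => ∑ i, (q i : ℝ) * X i j : Fin n → ℝ)‖ < ψ (qnorm q)} ∧ ¬ qnorm q < R := by
    by_contra h
    push_neg at h
    exact hinf (hfin.subset fun q hq => h q hq)
  obtain ⟨hq0, hqy⟩ := hqmem
  push_neg at hqR
  set y : Fin n → ℝ := fun j => ∑ i, (q i : ℝ) * X i j with hydef
  have hy1 : ‖y‖ < 1 / C := lt_trans hqy (hR _ hqR)
  set qv : Fin m → ℝ := fun i => (q i : ℝ) with hqvdef
  have hvm : Matrix.vecMul qv M = fun j => y (c j) := by
    funext j
    simp [Matrix.vecMul, dotProduct, hydef, hqvdef, hMdef]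
  have hqv : qv = Matrix.vecMul (Matrix.vecMul qv M) A := by
    rw [Matrix.vecMul_vecMul, hAdef, Matrix.mul_nonsing_inv M hunit, Matrix.vecMul_one]
  apply hq0
  funext i
  have key : |qv i| < 1 := by
    have h1 : |qv i| ≤ ∑ j, ‖y‖ * |A j i| := by
      conv_lhs => rw [hqv]
      rw [hvm]
      simp only [Matrix.vecMul, dotProduct]
      refine le_trans (Finset.abs_sum_le_sum_abs _ _) (Finset.sum_le_sum fun j _ => ?_)
      rw [abs_mul]
      have hyc : |y (c j)| ≤ ‖y‖ := by
        simpa [Real.norm_eq_abs] using norm_le_pi_norm y (c j)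
      exact mul_le_mul_of_nonneg_right hyc (abs_nonneg _)
    have h2 : ∑ j, ‖y‖ * |A j i| = ‖y‖ * ∑ j, |A j i| := by
      rw [Finset.mul_sum]
    have h3 : ∑ j, |A j i| ≤ C := by
      rw [hCdef]
      have : ∑ j, |A j i| ≤ ∑ j, ∑ i', |A j i'| :=
        Finset.sum_le_sum fun j _ =>
          Finset.single_le_sum (f := fun i' => |A j i'|)
            (fun i' _ => abs_nonneg _) (Finset.mem_univ i)
      linarith
    have h4 : ‖y‖ * ∑ j, |A j i| ≤ ‖y‖ * C :=
      mul_le_mul_of_nonneg_left h3 (norm_nonneg _)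
    have h5 : ‖y‖ * C < (1 / C) * C := by
      exact mul_lt_mul_of_pos_right hy1 hCpos
    have h6 : (1 / C) * C = 1 := by field_simp
    calc |qv i| ≤ ∑ j, ‖y‖ * |A j i| := h1
      _ = ‖y‖ * ∑ j, |A j i| := h2
      _ ≤ ‖y‖ * C := h4
      _ < 1 := by rw [← h6]; exact h5
  have : |(q i : ℝ)| < 1 := key
  have : |q i| < 1 := by exact_mod_cast this
  simp only [Pi.zero_apply]
  have := abs_lt.mp this
  omega
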